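/- Let w⁺(p) = exp(-(-ln p)^{0.5}) for p ∈ (0,1] with w⁺(0)=0, and define for p, q ∈ [0,1]: V₁(p,q) := 4·w⁺((1-p)(1-q)) + 3·(w⁺((1-p)(1-q) + p(1-q)) - w⁺((1-p)(1-q))) + 1·(w⁺((1-p)(1-q) + p(1-q) + pq) - w⁺((1-p)(1-q) + p(1-q))), and V₂(p,q) := p(1-q) + q(1-p). Then there is no pair (p,q) ∈ [0,1]² such that simultaneously p ∈ argmax_{p' ∈ [0,1]} V₁(p', q) and q ∈ argmax_{q' ∈ [0,1]} V₂(p, q'). -/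
import Mathlib

open Real

section Stmt19Aux

lemma exp_neg_taylor {y : ℝ} (h0 : 0 ≤ y) (h1 : y ≤ 1) :
    1 - y + y^2/2 - y^3/6 + y^4/24 - y^5/120 - 7*y^6/4320 ≤ Real.exp (-y) ∧
    Real.exp (-y) ≤ 1 - y + y^2/2 - y^3/6 + y^4/24 - y^5/120 + 7*y^6/4320 := by
  have hb : |(-y)| ≤ 1 := by rw [abs_neg, abs_of_nonneg h0]; exact h1
  have h := Real.exp_bound hb (n := 6) (by norm_num)
  have hsum : ∑ m ∈ Finset.range 6, (-y)^m / m.factorial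
      = 1 - y + y^2/2 - y^3/6 + y^4/24 - y^5/120 := by
    simp [Finset.sum_range_succ, Nat.factorial]
    ring
  rw [hsum, abs_neg, abs_of_nonneg h0] at h
  norm_num [Nat.factorial] at h
  have h2 := abs_le.1 h
  constructor <;> [nlinarith [h2.1]; nlinarith [h2.2]]

lemma expLB {a L : ℝ} (h0 : 0 ≤ a) (h2 : a ≤ 2)
    (hP : 0 ≤ 1 - a/2 + (a/2)^2/2 - (a/2)^3/6 + (a/2)^4/24 - (a/2)^5/120 - 7*(a/2)^6/4320)
    (hL : L ≤ (1 - a/2 + (a/2)^2/2 - (a/2)^3/6 + (a/2)^4/24 - (a/2)^5/120 - 7*(a/2)^6/4320)^2) :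
    L ≤ Real.exp (-a) := by
  set y := a/2 with hy
  have hT := (exp_neg_taylor (y := y) (by positivity) (by rw [hy]; linarith)).1
  have hsplit : Real.exp (-a) = Real.exp (-y) * Real.exp (-y) := by
    rw [← Real.exp_add]; congr 1; rw [hy]; ring
  calc L ≤ (1 - y + y^2/2 - y^3/6 + y^4/24 - y^5/120 - 7*y^6/4320)^2 := hL
    _ ≤ Real.exp (-y) * Real.exp (-y) := by
        rw [sq]; exact mul_self_le_mul_self hP hT
    _ = Real.exp (-a) := hsplit.symm

lemma expUB {a U : ℝ} (h0 : 0 ≤ a) (h2 : a ≤ 2)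
    (hU : (1 - a/2 + (a/2)^2/2 - (a/2)^3/6 + (a/2)^4/24 - (a/2)^5/120 + 7*(a/2)^6/4320)^2 ≤ U) :
    Real.exp (-a) ≤ U := by
  set y := a/2 with hy
  have hT := (exp_neg_taylor (y := y) (by positivity) (by rw [hy]; linarith)).2
  have hsplit : Real.exp (-a) = Real.exp (-y) * Real.exp (-y) := by
    rw [← Real.exp_add]; congr 1; rw [hy]; ring
  calc Real.exp (-a) = Real.exp (-y) * Real.exp (-y) := hsplit
    _ ≤ (1 - y + y^2/2 - y^3/6 + y^4/24 - y^5/120 + 7*y^6/4320)^2 := by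
        rw [sq]; exact mul_self_le_mul_self (Real.exp_nonneg _) hT
    _ ≤ U := hU

noncomputable def Wfun (x : ℝ) : ℝ := if x = 0 then 0 else Real.exp (-((-Real.log x) ^ (0.5 : ℝ)))

lemma Wfun_nonneg (x : ℝ) : 0 ≤ Wfun x := by
  unfold Wfun; split
  · exact le_refl 0
  · exact (Real.exp_pos _).le

lemma Wfun_one : Wfun 1 = 1 := by
  unfold Wfun
  rw [if_neg one_ne_zero, Real.log_one, neg_zero, Real.zero_rpow (by norm_num), neg_zero,
    Real.exp_zero]

lemma Wfun_lt_one {x : ℝ} (h0 : 0 ≤ x) (h1 : x < 1) : Wfun x < 1 := by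
  unfold Wfun; split
  · norm_num
  · rename_i hx
    have hxpos : 0 < x := lt_of_le_of_ne h0 (Ne.symm hx)
    have hlog : 0 < -Real.log x := by
      have := Real.log_neg hxpos h1; linarith
    have hr : 0 < (-Real.log x) ^ (0.5 : ℝ) := Real.rpow_pos_of_pos hlog _
    calc Real.exp (-((-Real.log x) ^ (0.5:ℝ))) < Real.exp 0 := Real.exp_lt_exp.2 (by linarith)
      _ = 1 := Real.exp_zero

lemma Wfun_mono {x y : ℝ} (h0 : 0 ≤ x) (hxy : x ≤ y) (h1 : y ≤ 1) : Wfun x ≤ Wfun y := by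
  rcases eq_or_lt_of_le h0 with h | hxpos
  · rw [← h]; unfold Wfun; rw [if_pos rfl]; exact Wfun_nonneg y
  · have hypos : 0 < y := lt_of_lt_of_le hxpos hxy
    unfold Wfun
    rw [if_neg (ne_of_gt hxpos), if_neg (ne_of_gt hypos)]
    apply Real.exp_le_exp.2
    apply neg_le_neg
    apply Real.rpow_le_rpow
    · have := Real.log_nonpos hypos.le h1; linarith
    · have := Real.log_le_log hxpos hxy; linarith
    · norm_num

lemma Wfun_ub {r s U : ℝ} (hr : 0 < r) (hs : 0 ≤ s) (h1 : r ≤ Real.exp (-(s*s)))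
    (h2 : Real.exp (-s) ≤ U) : Wfun r ≤ U := by
  unfold Wfun
  rw [if_neg (ne_of_gt hr)]
  have hlog : Real.log r ≤ -(s*s) := by
    have := Real.log_le_log hr h1
    rwa [Real.log_exp] at this
  have hss : s * s ≤ -Real.log r := by linarith
  have hnn : (0:ℝ) ≤ -Real.log r := le_trans (mul_self_nonneg s) hss
  have hrpow : (-Real.log r) ^ (0.5:ℝ) = Real.sqrt (-Real.log r) := by
    rw [Real.sqrt_eq_rpow]; norm_num
  have hsqrt : s ≤ Real.sqrt (-Real.log r) := by
    have := Real.sqrt_le_sqrt hss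
    rwa [Real.sqrt_mul_self hs] at this
  calc Real.exp (-((-Real.log r) ^ (0.5:ℝ))) ≤ Real.exp (-s) := by
        rw [hrpow]; exact Real.exp_le_exp.2 (by linarith)
    _ ≤ U := h2

lemma Wfun_lb {r s L : ℝ} (hr1 : r ≤ 1) (hs : 0 ≤ s) (h1 : Real.exp (-(s*s)) ≤ r)
    (h2 : L ≤ Real.exp (-s)) : L ≤ Wfun r := by
  have hrpos : 0 < r := lt_of_lt_of_le (Real.exp_pos _) h1
  unfold Wfun
  rw [if_neg (ne_of_gt hrpos)]
  have hlog : -(s*s) ≤ Real.log r := by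
    have := Real.log_le_log (Real.exp_pos _) h1
    rwa [Real.log_exp] at this
  have hnn : (0:ℝ) ≤ -Real.log r := by
    have := Real.log_nonpos hrpos.le hr1; linarith
  have hrpow : (-Real.log r) ^ (0.5:ℝ) = Real.sqrt (-Real.log r) := by
    rw [Real.sqrt_eq_rpow]; norm_num
  have hsqrt : Real.sqrt (-Real.log r) ≤ s := by
    have h3 : -Real.log r ≤ s * s := by linarith
    have := Real.sqrt_le_sqrt h3
    rwa [Real.sqrt_mul_self hs] at this
  calc L ≤ Real.exp (-s) := h2
    _ ≤ Real.exp (-((-Real.log r) ^ (0.5:ℝ))) := by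
        rw [hrpow]; exact Real.exp_le_exp.2 (by linarith)

lemma cert_ub_127_400 : Wfun (127/400) ≤ 17151/50000 :=
  Wfun_ub (by norm_num) (by norm_num)
    (expLB (a := 107/100 * (107/100)) (by norm_num) (by norm_num) (by norm_num) (by norm_num))
    (expUB (a := 107/100) (by norm_num) (by norm_num) (by norm_num))

lemma cert_ub_327_400 : Wfun (327/400) ≤ 12791/20000 :=
  Wfun_ub (by norm_num) (by norm_num)
    (expLB (a := 447/1000 * (447/1000)) (by norm_num) (by norm_num) (by norm_num) (by norm_num))
    (expUB (a := 447/1000) (by norm_num) (by norm_num) (by norm_num))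

lemma cert_ub_67_200 : Wfun (67/200) ≤ 17603/50000 :=
  Wfun_ub (by norm_num) (by norm_num)
    (expLB (a := 261/250 * (261/250)) (by norm_num) (by norm_num) (by norm_num) (by norm_num))
    (expUB (a := 261/250) (by norm_num) (by norm_num) (by norm_num))

lemma cert_ub_167_200 : Wfun (167/200) ≤ 16377/25000 :=
  Wfun_ub (by norm_num) (by norm_num)
    (expLB (a := 423/1000 * (423/1000)) (by norm_num) (by norm_num) (by norm_num) (by norm_num))
    (expUB (a := 423/1000) (by norm_num) (by norm_num) (by norm_num))

lemma cert_lb_127_200 : (10183/20000:ℝ) ≤ Wfun (127/200) :=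
  Wfun_lb (by norm_num) (by norm_num)
    (expUB (a := 27/40 * (27/40)) (by norm_num) (by norm_num) (by norm_num))
    (expLB (a := 27/40) (by norm_num) (by norm_num) (by norm_num) (by norm_num))

lemma cert_ub_143_400 : Wfun (143/400) ≤ 18157/50000 :=
  Wfun_ub (by norm_num) (by norm_num)
    (expLB (a := 1013/1000 * (1013/1000)) (by norm_num) (by norm_num) (by norm_num) (by norm_num))
    (expUB (a := 1013/1000) (by norm_num) (by norm_num) (by norm_num))

lemma cert_ub_343_400 : Wfun (343/400) ≤ 67639/100000 :=
  Wfun_ub (by norm_num) (by norm_num)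
    (expLB (a := 391/1000 * (391/1000)) (by norm_num) (by norm_num) (by norm_num) (by norm_num))
    (expUB (a := 391/1000) (by norm_num) (by norm_num) (by norm_num))

lemma cert_lb_67_100 : (26523/50000:ℝ) ≤ Wfun (67/100) :=
  Wfun_lb (by norm_num) (by norm_num)
    (expUB (a := 317/500 * (317/500)) (by norm_num) (by norm_num) (by norm_num))
    (expLB (a := 317/500) (by norm_num) (by norm_num) (by norm_num) (by norm_num))

lemma cert_ub_39_100 : Wfun (39/100) ≤ 37947/100000 :=
  Wfun_ub (by norm_num) (by norm_num)
    (expLB (a := 969/1000 * (969/1000)) (by norm_num) (by norm_num) (by norm_num) (by norm_num))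
    (expUB (a := 969/1000) (by norm_num) (by norm_num) (by norm_num))

lemma cert_ub_89_100 : Wfun (89/100) ≤ 35589/50000 :=
  Wfun_ub (by norm_num) (by norm_num)
    (expLB (a := 17/50 * (17/50)) (by norm_num) (by norm_num) (by norm_num) (by norm_num))
    (expUB (a := 17/50) (by norm_num) (by norm_num) (by norm_num))

lemma cert_lb_143_200 : (55933/100000:ℝ) ≤ Wfun (143/200) :=
  Wfun_lb (by norm_num) (by norm_num)
    (expUB (a := 581/1000 * (581/1000)) (by norm_num) (by norm_num) (by norm_num))
    (expLB (a := 581/1000) (by norm_num) (by norm_num) (by norm_num) (by norm_num))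

lemma cert_ub_87_200 : Wfun (87/200) ≤ 40213/100000 :=
  Wfun_ub (by norm_num) (by norm_num)
    (expLB (a := 911/1000 * (911/1000)) (by norm_num) (by norm_num) (by norm_num) (by norm_num))
    (expUB (a := 911/1000) (by norm_num) (by norm_num) (by norm_num))

lemma cert_ub_187_200 : Wfun (187/200) ≤ 3863/5000 :=
  Wfun_ub (by norm_num) (by norm_num)
    (expLB (a := 129/500 * (129/500)) (by norm_num) (by norm_num) (by norm_num) (by norm_num))
    (expUB (a := 129/500) (by norm_num) (by norm_num) (by norm_num))

lemma cert_lb_39_50 : (15163/25000:ℝ) ≤ Wfun (39/50) :=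
  Wfun_lb (by norm_num) (by norm_num)
    (expUB (a := 1/2 * (1/2)) (by norm_num) (by norm_num) (by norm_num))
    (expLB (a := 1/2) (by norm_num) (by norm_num) (by norm_num) (by norm_num))

lemma cert_ub_93_200 : Wfun (93/200) ≤ 41729/100000 :=
  Wfun_ub (by norm_num) (by norm_num)
    (expLB (a := 437/500 * (437/500)) (by norm_num) (by norm_num) (by norm_num) (by norm_num))
    (expUB (a := 437/500) (by norm_num) (by norm_num) (by norm_num))

lemma cert_ub_193_200 : Wfun (193/200) ≤ 16589/20000 :=
  Wfun_ub (by norm_num) (by norm_num)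
    (expLB (a := 187/1000 * (187/1000)) (by norm_num) (by norm_num) (by norm_num) (by norm_num))
    (expUB (a := 187/1000) (by norm_num) (by norm_num) (by norm_num))

lemma cert_lb_87_100 : (8591/12500:ℝ) ≤ Wfun (87/100) :=
  Wfun_lb (by norm_num) (by norm_num)
    (expUB (a := 3/8 * (3/8)) (by norm_num) (by norm_num) (by norm_num))
    (expLB (a := 3/8) (by norm_num) (by norm_num) (by norm_num) (by norm_num))

lemma cert_ub_1_2 : Wfun (1/2) ≤ 21781/50000 :=
  Wfun_ub (by norm_num) (by norm_num)
    (expLB (a := 831/1000 * (831/1000)) (by norm_num) (by norm_num) (by norm_num) (by norm_num))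
    (expUB (a := 831/1000) (by norm_num) (by norm_num) (by norm_num))

lemma cert_lb_93_100 : (76261/100000:ℝ) ≤ Wfun (93/100) :=
  Wfun_lb (by norm_num) (by norm_num)
    (expUB (a := 271/1000 * (271/1000)) (by norm_num) (by norm_num) (by norm_num))
    (expLB (a := 271/1000) (by norm_num) (by norm_num) (by norm_num) (by norm_num))

lemma key {t : ℝ} (ht0 : 0 ≤ t) (ht1 : t ≤ 1)
    (hA : 2 * Wfun t ≤ Wfun (t/2) + Wfun ((1+t)/2))
    (hB : 1 ≤ Wfun (t/2) + Wfun ((1+t)/2)) : False := by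
  rcases le_or_gt t (127/200) with hc0 | hc0
  · have m1 : Wfun (t/2) ≤ Wfun (127/400) := Wfun_mono (by linarith) (by linarith) (by norm_num)
    have u1 := cert_ub_127_400
    have m2 : Wfun ((1+t)/2) ≤ Wfun (327/400) := Wfun_mono (by linarith) (by linarith) (by norm_num)
    have u2 := cert_ub_327_400
    linarith
  rcases le_or_gt t (67/100) with hc1 | hc1
  · have m1 : Wfun (t/2) ≤ Wfun (67/200) := Wfun_mono (by linarith) (by linarith) (by norm_num)
    have u1 := cert_ub_67_200
    have m2 : Wfun ((1+t)/2) ≤ Wfun (167/200) := Wfun_mono (by linarith) (by linarith) (by norm_num)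
    have u2 := cert_ub_167_200
    have m3 : Wfun (127/200) ≤ Wfun t := Wfun_mono (by norm_num) (by linarith) (by linarith)
    have l3 := cert_lb_127_200
    linarith
  rcases le_or_gt t (143/200) with hc2 | hc2
  · have m1 : Wfun (t/2) ≤ Wfun (143/400) := Wfun_mono (by linarith) (by linarith) (by norm_num)
    have u1 := cert_ub_143_400
    have m2 : Wfun ((1+t)/2) ≤ Wfun (343/400) := Wfun_mono (by linarith) (by linarith) (by norm_num)
    have u2 := cert_ub_343_400
    have m3 : Wfun (67/100) ≤ Wfun t := Wfun_mono (by norm_num) (by linarith) (by linarith)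
    have l3 := cert_lb_67_100
    linarith
  rcases le_or_gt t (39/50) with hc3 | hc3
  · have m1 : Wfun (t/2) ≤ Wfun (39/100) := Wfun_mono (by linarith) (by linarith) (by norm_num)
    have u1 := cert_ub_39_100
    have m2 : Wfun ((1+t)/2) ≤ Wfun (89/100) := Wfun_mono (by linarith) (by linarith) (by norm_num)
    have u2 := cert_ub_89_100
    have m3 : Wfun (143/200) ≤ Wfun t := Wfun_mono (by norm_num) (by linarith) (by linarith)
    have l3 := cert_lb_143_200
    linarith
  rcases le_or_gt t (87/100) with hc4 | hc4
  · have m1 : Wfun (t/2) ≤ Wfun (87/200) := Wfun_mono (by linarith) (by linarith) (by norm_num)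
    have u1 := cert_ub_87_200
    have m2 : Wfun ((1+t)/2) ≤ Wfun (187/200) := Wfun_mono (by linarith) (by linarith) (by norm_num)
    have u2 := cert_ub_187_200
    have m3 : Wfun (39/50) ≤ Wfun t := Wfun_mono (by norm_num) (by linarith) (by linarith)
    have l3 := cert_lb_39_50
    linarith
  rcases le_or_gt t (93/100) with hc5 | hc5
  · have m1 : Wfun (t/2) ≤ Wfun (93/200) := Wfun_mono (by linarith) (by linarith) (by norm_num)
    have u1 := cert_ub_93_200
    have m2 : Wfun ((1+t)/2) ≤ Wfun (193/200) := Wfun_mono (by linarith) (by linarith) (by norm_num)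
    have u2 := cert_ub_193_200
    have m3 : Wfun (87/100) ≤ Wfun t := Wfun_mono (by norm_num) (by linarith) (by linarith)
    have l3 := cert_lb_87_100
    linarith
  have m1 : Wfun (t/2) ≤ Wfun (1/2) := Wfun_mono (by linarith) (by linarith) (by norm_num)
  have u1 := cert_ub_1_2
  have m2 : Wfun ((1+t)/2) ≤ Wfun 1 := Wfun_mono (by linarith) (by linarith) (by norm_num)
  rw [Wfun_one] at m2
  have m3 : Wfun (93/100) ≤ Wfun t := Wfun_mono (by norm_num) (by linarith) (by linarith)
  have l3 := cert_lb_93_100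
  linarith

end Stmt19Aux

theorem stmt_19 :
    let w : ℝ → ℝ := fun p => if p = 0 then 0 else Real.exp (-((-Real.log p) ^ (0.5 : ℝ)))
    let V₁ : ℝ → ℝ → ℝ := fun p q =>
      4 * w ((1 - p) * (1 - q))
      + 3 * (w ((1 - p) * (1 - q) + p * (1 - q)) - w ((1 - p) * (1 - q)))
      + 1 * (w ((1 - p) * (1 - q) + p * (1 - q) + p * q)
              - w ((1 - p) * (1 - q) + p * (1 - q)))
    let V₂ : ℝ → ℝ → ℝ := fun p q => p * (1 - q) + q * (1 - p)
    ¬ ∃ p ∈ Set.Icc (0:ℝ) 1, ∃ q ∈ Set.Icc (0:ℝ) 1,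
        (∀ p' ∈ Set.Icc (0:ℝ) 1, V₁ p' q ≤ V₁ p q) ∧
        (∀ q' ∈ Set.Icc (0:ℝ) 1, V₂ p q' ≤ V₂ p q) := by
  intro w V₁ V₂
  rintro ⟨p, ⟨hp0, hp1⟩, q, ⟨hq0, hq1⟩, h1, h2⟩
  have hw : w = Wfun := rfl
  have hW0 : Wfun 0 = 0 := by unfold Wfun; rw [if_pos rfl]
  rcases lt_trichotomy p (1/2) with hlt | heq | hgt
  · have hq' := h2 1 ⟨by norm_num, le_refl 1⟩
    simp only [V₂] at hq'
    have hqq : q = 1 := by nlinarith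
    subst hqq
    have h3 := h1 1 ⟨by norm_num, le_refl 1⟩
    simp only [V₁, hw] at h3
    norm_num [hW0, Wfun_one] at h3
    have := Wfun_lt_one hp0 (by linarith)
    linarith
  · subst heq
    have ha := h1 0 ⟨le_refl 0, by norm_num⟩
    have hb := h1 1 ⟨by norm_num, le_refl 1⟩
    simp only [V₁, hw] at ha hb
    norm_num [hW0, Wfun_one] at ha hb
    have e3 : (1:ℝ)/2*(1-q) + 1/2*(1-q) + 1/2*q = (1+(1-q))/2 := by ring
    have e2 : (1:ℝ)/2*(1-q) + 1/2*(1-q) = 1-q := by ring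
    have e1 : (1:ℝ)/2*(1-q) = (1-q)/2 := by ring
    rw [e3, e2, e1] at ha hb
    exact key (t := 1-q) (by linarith) (by linarith) (by linarith) (by linarith)
  · have hq' := h2 0 ⟨le_refl 0, by norm_num⟩
    simp only [V₂] at hq'
    have hqq : q = 0 := by nlinarith
    subst hqq
    have h3 := h1 0 ⟨le_refl 0, by norm_num⟩
    simp only [V₁, hw] at h3
    norm_num [hW0, Wfun_one] at h3
    have := Wfun_lt_one (x := 1-p) (by linarith) (by linarith)
    linarith
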